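/- arXiv:1201.5500 — 3 statements merged into one kernel-verified Lean document; each statement's English description precedes it below -/
import Mathlib

section
/- Let $H$ be a Hilbert space and $\{x_n\}_{n=0}^\infty$ a total sequence in $H$ whose Gram matrix $(x_n,x_m)_H = \Gamma_{n,m}$ satisfies the Hankel-type symmetry $\Gamma_{n+N,m} = \Gamma_{n,m+N}$ for all $n,m \ge 0$ (which holds when $\Gamma_{rN+j,tN+n}=s_{r+t}^{j,n}$ for Hermitian matrices $S_r=(s_r^{j,n})$). Then the operator $A$ defined on $L = \operatorname{Lin}\{x_n\}$ by $A\left(\sum_k \alpha_k x_k\right) = \sum_k \alpha_k x_{k+N}$ is well-defined (independent of the representation of an element of $L$ as a finite linear combination) and symmetric: $(Ax, y)_H = (x, Ay)_H$ for all $x, y \in L$. -/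
local notation "⟪" x ", " y "⟫" => @inner ℂ _ _ x y

/-- If the Gram matrix of a total sequence `x` has the block Hankel symmetry
`Γ_{n+N,m} = Γ_{n,m+N}`, then the shift operator `A (∑ α_k x_k) = ∑ α_k x_{k+N}`
is well defined on the linear span of the `x_n` and symmetric there. -/
theorem stmt2 {H : Type*} [NormedAddCommGroup H] [InnerProductSpace ℂ H]
    (N : ℕ) (hN : 0 < N) (x : ℕ → H)
    (htot : (Submodule.span ℂ (Set.range x)).topologicalClosure = ⊤)
    (hHankel : ∀ n m : ℕ, ⟪x (n + N), x m⟫ = ⟪x n, x (m + N)⟫) :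
    (∀ α β : ℕ →₀ ℂ,
        (α.sum fun k a => a • x k) = (β.sum fun k a => a • x k) →
        (α.sum fun k a => a • x (k + N)) = (β.sum fun k a => a • x (k + N))) ∧
    (∀ α β : ℕ →₀ ℂ,
        ⟪α.sum fun k a => a • x (k + N), β.sum fun k a => a • x k⟫ =
        ⟪α.sum fun k a => a • x k, β.sum fun k a => a • x (k + N)⟫) := by
  -- key: inner of shifted sum with x m
  have key : ∀ (γ : ℕ →₀ ℂ) (m : ℕ),
      ⟪γ.sum fun k a => a • x (k + N), x m⟫ = ⟪γ.sum fun k a => a • x k, x (m + N)⟫ := by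
    intro γ m
    simp only [Finsupp.sum, sum_inner, inner_smul_left]
    exact Finset.sum_congr rfl fun k _ => by rw [hHankel]
  constructor
  · intro α β hαβ
    set v := (α.sum fun k a => a • x (k + N)) - (β.sum fun k a => a • x (k + N)) with hv
    have hvx : ∀ m, ⟪v, x m⟫ = 0 := by
      intro m
      rw [hv, inner_sub_left, key, key, hαβ, sub_self]
    have hspan : ∀ u ∈ Submodule.span ℂ (Set.range x), ⟪v, u⟫ = 0 := by
      intro u hu
      induction hu using Submodule.span_induction with
      | mem u hu => obtain ⟨m, rfl⟩ := hu; exact hvx m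
      | zero => exact inner_zero_right v
      | add u w _ _ h1 h2 => rw [inner_add_right, h1, h2, add_zero]
      | smul c u _ h1 => rw [inner_smul_right, h1, mul_zero]
    have hdense : Dense ((Submodule.span ℂ (Set.range x)) : Set H) :=
      Submodule.dense_iff_topologicalClosure_eq_top.mpr htot
    have hcont : Continuous fun u : H => ⟪v, u⟫ := (innerSL ℂ v).continuous
    have hall : (fun u : H => ⟪v, u⟫) = fun _ => (0 : ℂ) :=
      Continuous.ext_on hdense hcont continuous_const hspan
    have : ⟪v, v⟫ = 0 := congrFun hall v
    have hv0 : v = 0 := inner_self_eq_zero.mp this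
    exact sub_eq_zero.mp hv0
  · intro α β
    simp only [Finsupp.sum] at key ⊢
    rw [inner_sum, inner_sum]
    simp only [inner_smul_right]
    exact Finset.sum_congr rfl fun l _ => by rw [key]
end

section
/- Let $A$ be a densely defined symmetric operator in a Hilbert space $H$ and let $\widetilde{A}$ be a self-adjoint extension of $A$ in a Hilbert space $\widetilde{H} \supseteq H$. Then for all $x, y \in D(A)$ and all $z \in \mathbb{C}_+ \setminus \{i\}$: $(P_H R_z(\widetilde{A}) x, y)_H = \frac{1}{z^2+1}(P_H R_z(\widetilde{A})(A-i)x, (A-i)y)_H - \frac{1}{z^2+1}(Ax, y)_H - \frac{z}{z^2+1}(x, y)_H$, where $R_z(\widetilde{A}) = (\widetilde{A} - z)^{-1}$ and $P_H$ is the orthogonal projection of $\widetilde{H}$ onto $H$. -/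
local notation "⟪" x ", " y "⟫" => @inner ℂ _ _ x y

/-- For a densely defined symmetric operator `A` in `H` and a self-adjoint extension
`Ã` in `H̃ ⊇ H` with resolvent `R z = (Ã - z)⁻¹`, one has, for `x, y ∈ D(A)` and
`z ∈ ℂ₊ \ {i}`:
`(P_H R_z x, y) = (z²+1)⁻¹ (P_H R_z (A-i)x, (A-i)y) - (z²+1)⁻¹ (Ax, y) - z(z²+1)⁻¹ (x, y)`.
(The inner product `(a,b)` here is linear in the first argument, i.e. `(a,b) = ⟪b,a⟫`.) -/
theorem stmt3 {Ht : Type*} [NormedAddCommGroup Ht] [InnerProductSpace ℂ Ht]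
    [CompleteSpace Ht]
    -- the subspace `H` of `H̃`
    (K : Submodule ℂ Ht) [CompleteSpace K]
    -- the densely defined symmetric operator `A` in `H`
    (D : Submodule ℂ Ht) (hDK : D ≤ K)
    (A : D →ₗ[ℂ] Ht) (hAK : ∀ u : D, A u ∈ K)
    (hdenseA : (K : Set Ht) ⊆ closure (D : Set Ht))
    (hsym : ∀ u v : D, ⟪A u, (v : Ht)⟫ = ⟪(u : Ht), A v⟫)
    -- the self-adjoint extension `Ã` in `H̃`
    (Dt : Submodule ℂ Ht) (hDDt : D ≤ Dt)
    (At : Dt →ₗ[ℂ] Ht) (hdense : Dense (Dt : Set Ht))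
    (hext : ∀ u : D, At ⟨(u : Ht), hDDt u.2⟩ = A u)
    (hsa : ∀ v w : Ht,
      (∀ u : Dt, ⟪At u, v⟫ = ⟪(u : Ht), w⟫) ↔ ∃ hv : v ∈ Dt, At ⟨v, hv⟩ = w)
    -- the resolvent `R z = (Ã - z)⁻¹`
    (R : ℂ → Ht →L[ℂ] Ht)
    (hR : ∀ z : ℂ, z.im ≠ 0 → ∀ u : Ht,
      ∃ h : R z u ∈ Dt, At ⟨R z u, h⟩ - z • R z u = u)
    (hR' : ∀ z : ℂ, z.im ≠ 0 → ∀ u : Dt, R z (At u - z • (u : Ht)) = (u : Ht))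
    (z : ℂ) (hz : 0 < z.im) (hzi : z ≠ Complex.I)
    (x y : D) :
    ⟪(y : Ht), (K.orthogonalProjection (R z (x : Ht)) : Ht)⟫ =
      (1 / (z ^ 2 + 1)) *
        ⟪A y - Complex.I • (y : Ht),
          (K.orthogonalProjection (R z (A x - Complex.I • (x : Ht))) : Ht)⟫ -
      (1 / (z ^ 2 + 1)) * ⟪(y : Ht), A x⟫ -
      (z / (z ^ 2 + 1)) * ⟪(y : Ht), (x : Ht)⟫ := by
  have hzne : z.im ≠ 0 := ne_of_gt hz
  have hz2 : z ^ 2 + 1 ≠ 0 := by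
    intro h
    have hmul : (z - Complex.I) * (z + Complex.I) = 0 := by
      linear_combination h - Complex.I_sq
    rcases mul_eq_zero.mp hmul with h1 | h1
    · exact hzi (sub_eq_zero.mp h1)
    · have hzI : z = -Complex.I := eq_neg_of_add_eq_zero_left h1
      rw [hzI] at hz
      norm_num at hz
  -- inner products with the projection, for vectors in K
  have proj : ∀ v w : Ht, v ∈ K →
      ⟪v, ((K.orthogonalProjection w : K) : Ht)⟫ = ⟪v, w⟫ := by
    intro v w hv
    have h1 : w - ((K.orthogonalProjection w : K) : Ht) ∈ Kᗮ :=
      K.sub_starProjection_mem_orthogonal w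
    have h2 := (Submodule.mem_orthogonal K _).mp h1 v hv
    rw [inner_sub_right] at h2
    linear_combination -h2
  obtain ⟨hu, huu⟩ := hR z hzne (x : Ht)
  set u := R z (x : Ht) with hudef
  have hAtu : At ⟨u, hu⟩ = (x : Ht) + z • u := eq_add_of_sub_eq huu
  -- symmetry of At
  have symAt : ∀ v w : Dt, ⟪At w, (v : Ht)⟫ = ⟪(w : Ht), At v⟫ := by
    intro v w
    exact ((hsa (v : Ht) (At v)).mpr ⟨v.2, rfl⟩) w
  -- key inner product identity for ⟪A y, u⟫
  have h1 : ⟪A y, u⟫ = ⟪(y : Ht), (x : Ht)⟫ + z * ⟪(y : Ht), u⟫ := by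
    have := symAt ⟨u, hu⟩ ⟨(y : Ht), hDDt y.2⟩
    rw [hext y, hAtu, inner_add_right, inner_smul_right] at this
    exact this
  -- resolvent identity: R z ((A - z) x) = x
  have hRx : R z ((A x : Ht) - z • (x : Ht)) = (x : Ht) := by
    have h := hR' z hzne ⟨(x : Ht), hDDt x.2⟩
    rwa [hext x] at h
  -- hence R z ((A - i) x) = x + (z - i) u
  have hRix : R z ((A x : Ht) - Complex.I • (x : Ht))
      = (x : Ht) + (z - Complex.I) • u := by
    have hsplit : (A x : Ht) - Complex.I • (x : Ht)
        = ((A x : Ht) - z • (x : Ht)) + (z - Complex.I) • (x : Ht) := by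
      module
    rw [hsplit, map_add, map_smul, hRx]
  -- membership facts
  have hyK : (y : Ht) ∈ K := hDK y.2
  have hAyK : (A y : Ht) - Complex.I • (y : Ht) ∈ K :=
    K.sub_mem (hAK y) (K.smul_mem _ hyK)
  -- the main computation
  have key : ⟪(A y : Ht) - Complex.I • (y : Ht), (x : Ht) + (z - Complex.I) • u⟫
      = ⟪(y : Ht), A x⟫ + z * ⟪(y : Ht), (x : Ht)⟫
        + (z ^ 2 + 1) * ⟪(y : Ht), u⟫ := by
    simp only [inner_sub_left, inner_add_right, inner_smul_left, inner_smul_right,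
      Complex.conj_I]
    rw [hsym y x, h1]
    linear_combination (-⟪(y : Ht), u⟫) * Complex.I_sq
  rw [proj _ _ hyK, proj _ _ hAyK, hRix, key]
  field_simp
  ring
end

section
/- Let $A$ be a densely defined symmetric operator in a Hilbert space $H$ whose closure $\overline{A}$ is self-adjoint (i.e., one, hence both, deficiency indices vanish and $A$ is essentially self-adjoint). Then $A$ has a unique spectral function: every spectral function $\mathbf{E}_\lambda = P_H \widehat{E}_\lambda$ arising from a self-adjoint extension $\widehat{A}$ of $A$ in a possibly larger space $\widehat{H} \supseteq H$ coincides with the spectral resolution $E_\lambda$ of $\overline{A}$. -/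
local notation "⟪" x ", " y "⟫" => @inner ℂ _ _ x y

theorem aux_lb {H : Type*} [NormedAddCommGroup H] [InnerProductSpace ℂ H]
    (D : Submodule ℂ H) (A : D →ₗ[ℂ] H)
    (hsym : ∀ u v : D, ⟪A u, (v : H)⟫ = ⟪(u : H), A v⟫)
    (z : ℂ) (u : D) : |z.im| * ‖(u : H)‖ ≤ ‖A u - z • (u : H)‖ := by
  set a : H := A u - (z.re : ℂ) • (u : H) with ha
  set b : H := ((z.im : ℂ) * Complex.I) • (u : H) with hb
  have hz : ((z.re : ℂ) + (z.im : ℂ) * Complex.I) = z := Complex.re_add_im z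
  have hzs : z • (u : H) = (z.re : ℂ) • (u : H) + ((z.im : ℂ) * Complex.I) • (u : H) := by
    rw [← add_smul, hz]
  have hdecomp : A u - z • (u : H) = a - b := by rw [ha, hb, hzs]; abel
  have h3 : (⟪A u, (u : H)⟫).im = 0 := by
    refine Complex.conj_eq_iff_im.mp ?_
    rw [inner_conj_symm]; exact (hsym u u).symm
  have h4 : (⟪(u : H), (u : H)⟫).im = 0 := by
    rw [@inner_self_eq_norm_sq_to_K ℂ]; simp [pow_two, Complex.mul_im]
  have him : (⟪a, (u : H)⟫).im = 0 := by
    rw [ha, inner_sub_left, inner_smul_left, Complex.sub_im, Complex.mul_im, h3]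
    simp [h4, ← Complex.ofReal_pow]
  have hreab : (⟪a, b⟫).re = 0 := by
    rw [hb, inner_smul_right, Complex.mul_re]
    simp [him]
  have hab : ‖a - b‖ ^ 2 = ‖a‖ ^ 2 - 2 * (⟪a, b⟫).re + ‖b‖ ^ 2 := by
    have := @norm_sub_sq ℂ _ _ _ _ a b
    simpa using this
  have hbnorm : ‖b‖ = |z.im| * ‖(u : H)‖ := by
    rw [hb, norm_smul, norm_mul, Complex.norm_I, mul_one, Complex.norm_real, Real.norm_eq_abs]

  have h5 : (|z.im| * ‖(u : H)‖) ^ 2 ≤ ‖a - b‖ ^ 2 := by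
    rw [hab, hreab, ← hbnorm]; nlinarith [sq_nonneg ‖a‖]
  rw [hdecomp]
  nlinarith [norm_nonneg (a - b), mul_nonneg (abs_nonneg z.im) (norm_nonneg ((u : H)))]

theorem aux_dense {H : Type*} [NormedAddCommGroup H] [InnerProductSpace ℂ H]
    [CompleteSpace H] (D : Submodule ℂ H) (A : D →ₗ[ℂ] H) (z : ℂ)
    (hN : ∀ w : H, (∀ u : D, ⟪A u - z • (u : H), w⟫ = 0) → w = 0) :
    Dense ((LinearMap.range (A - z • D.subtype) : Submodule ℂ H) : Set H) := by
  rw [Submodule.dense_iff_topologicalClosure_eq_top,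
    Submodule.topologicalClosure_eq_top_iff]
  rw [Submodule.eq_bot_iff]
  intro w hw
  refine hN w fun u => ?_
  refine (Submodule.mem_orthogonal _ w).mp hw _ ?_
  exact LinearMap.mem_range.mpr ⟨u, by simp⟩

theorem aux_step {H : Type*} [NormedAddCommGroup H] [InnerProductSpace ℂ H]
    [CompleteSpace H] (D : Submodule ℂ H) (A : D →ₗ[ℂ] H)
    (hsym : ∀ u v : D, ⟪A u, (v : H)⟫ = ⟪(u : H), A v⟫)
    (z₀ z : ℂ) (hlt : ‖z - z₀‖ < |z₀.im|)
    (hN0 : ∀ w : H, (∀ u : D, ⟪A u - z₀ • (u : H), w⟫ = 0) → w = 0) :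
    ∀ w : H, (∀ u : D, ⟪A u - z • (u : H), w⟫ = 0) → w = 0 := by
  intro w hw
  by_contra hw0
  have hwpos : 0 < ‖w‖ := norm_pos_iff.mpr hw0
  have him0 : 0 < |z₀.im| := lt_of_le_of_lt (norm_nonneg (z - z₀)) hlt
  set c : ℝ := ‖z - z₀‖ / |z₀.im| with hcdef
  have hc1 : c < 1 := (div_lt_one him0).mpr hlt
  have hc0 : 0 ≤ c := div_nonneg (norm_nonneg _) (abs_nonneg _)
  have hcmul : c * |z₀.im| = ‖z - z₀‖ := div_mul_cancel₀ _ (ne_of_gt him0)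
  have hid : ∀ u : D, ⟪A u - z₀ • (u : H), w⟫
      = (starRingEnd ℂ) (z - z₀) * ⟪(u : H), w⟫ := by
    intro u
    have hdec : A u - z₀ • (u : H) = (A u - z • (u : H)) + (z - z₀) • (u : H) := by
      module
    rw [hdec, inner_add_left, hw u, inner_smul_left, zero_add]
  have hd := aux_dense D A z₀ hN0
  set ε : ℝ := (1 - c) * ‖w‖ / (2 * (c + 2)) with hεdef
  have hε : 0 < ε := div_pos (mul_pos (by linarith) hwpos) (by linarith)
  obtain ⟨y, hyK, hydist⟩ := Metric.mem_closure_iff.mp (hd w) ε hε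
  obtain ⟨u, hu⟩ := LinearMap.mem_range.mp hyK
  have hyu : A u - z₀ • (u : H) = y := by simpa using hu
  have hwy : ‖w - y‖ < ε := by rw [← dist_eq_norm]; exact hydist
  have hyn : ‖y‖ ≤ ‖w‖ + ε := by
    have h := norm_sub_le w (w - y)
    rw [sub_sub_cancel] at h
    linarith
  have hun : |z₀.im| * ‖(u : H)‖ ≤ ‖y‖ := hyu ▸ aux_lb D A hsym z₀ u
  have e0 : (⟪w, w⟫ : ℂ) = ⟪y, w⟫ + ⟪w - y, w⟫ := by rw [inner_sub_left]; ring
  have e1 : ‖(⟪w, w⟫ : ℂ)‖ = ‖w‖ ^ 2 := by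
    rw [@inner_self_eq_norm_sq_to_K ℂ]
    simp [pow_two]
  have hn1 : ‖(⟪(u : H), w⟫ : ℂ)‖ ≤ ‖(u : H)‖ * ‖w‖ := norm_inner_le_norm _ _
  have e2 : ‖(⟪y, w⟫ : ℂ)‖ ≤ c * (‖w‖ + ε) * ‖w‖ := by
    rw [← hyu, hid u, norm_mul, RCLike.norm_conj]
    have t1 : ‖z - z₀‖ * ‖(⟪(u : H), w⟫ : ℂ)‖ ≤ ‖z - z₀‖ * (‖(u : H)‖ * ‖w‖) :=
      mul_le_mul_of_nonneg_left hn1 (norm_nonneg _)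
    have t2 : c * ‖w‖ * (|z₀.im| * ‖(u : H)‖) ≤ c * ‖w‖ * ‖y‖ :=
      mul_le_mul_of_nonneg_left hun (mul_nonneg hc0 (norm_nonneg w))
    have t3 : c * ‖w‖ * ‖y‖ ≤ c * ‖w‖ * (‖w‖ + ε) :=
      mul_le_mul_of_nonneg_left hyn (mul_nonneg hc0 (norm_nonneg w))
    rw [← hcmul] at t1 ⊢
    linarith [t1, t2, t3]
  have e3 : ‖(⟪w - y, w⟫ : ℂ)‖ ≤ ε * ‖w‖ := by
    calc ‖(⟪w - y, w⟫ : ℂ)‖ ≤ ‖w - y‖ * ‖w‖ := norm_inner_le_norm _ _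
      _ ≤ ε * ‖w‖ := by nlinarith
  have key : ‖w‖ ^ 2 ≤ c * (‖w‖ + ε) * ‖w‖ + ε * ‖w‖ := by
    calc ‖w‖ ^ 2 = ‖(⟪w, w⟫ : ℂ)‖ := e1.symm
      _ ≤ ‖(⟪y, w⟫ : ℂ)‖ + ‖(⟪w - y, w⟫ : ℂ)‖ := by rw [e0]; exact norm_add_le _ _
      _ ≤ c * (‖w‖ + ε) * ‖w‖ + ε * ‖w‖ := add_le_add e2 e3
  have hεle : ε * (2 * (c + 2)) = (1 - c) * ‖w‖ := by
    rw [hεdef]; field_simp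
  nlinarith [key, hεle, hwpos, hc0, hc1, hε, mul_pos hε hwpos]

theorem aux_global {H : Type*} [NormedAddCommGroup H] [InnerProductSpace ℂ H]
    [CompleteSpace H] (D : Submodule ℂ H) (A : D →ₗ[ℂ] H)
    (hsym : ∀ u v : D, ⟪A u, (v : H)⟫ = ⟪(u : H), A v⟫)
    (z₀ z : ℂ) (h1 : |z₀.im| = 1) (hsgn : 0 < z₀.im * z.im)
    (hN0 : ∀ w : H, (∀ u : D, ⟪A u - z₀ • (u : H), w⟫ = 0) → w = 0) :
    ∀ w : H, (∀ u : D, ⟪A u - z • (u : H), w⟫ = 0) → w = 0 := by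
  set p : ℝ := z₀.im * z.im with hpdef
  set m : ℝ := min 1 p with hmdef
  have hm : 0 < m := lt_min one_pos hsgn
  have hm1 : m ≤ 1 := min_le_left _ _
  have hmp : m ≤ p := min_le_right _ _
  obtain ⟨n, hn⟩ := exists_nat_gt (‖z - z₀‖ / m)
  have hn0 : 0 < (n : ℝ) := lt_of_le_of_lt (div_nonneg (norm_nonneg _) hm.le) hn
  have hnn : n ≠ 0 := by exact_mod_cast hn0.ne'
  have hdist : ‖z - z₀‖ < n * m := (div_lt_iff₀ hm).mp hn
  set g : ℕ → ℂ := fun k => z₀ + (((k : ℝ) / (n : ℝ) : ℝ) : ℂ) * (z - z₀) with hgdef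
  have hgim : ∀ k : ℕ, (g k).im = z₀.im + ((k : ℝ) / n) * (z - z₀).im := by
    intro k; simp [hgdef]
  have hglow : ∀ k : ℕ, k ≤ n → m ≤ |(g k).im| := by
    intro k hk
    set t : ℝ := (k : ℝ) / n with htdef
    have ht0 : 0 ≤ t := div_nonneg (Nat.cast_nonneg k) hn0.le
    have ht1 : t ≤ 1 := (div_le_one hn0).mpr (Nat.cast_le.mpr hk)
    have hsq : z₀.im * z₀.im = 1 := by nlinarith [sq_abs z₀.im, h1]
    have hlow : m ≤ z₀.im * (g k).im := by
      rw [hgim k, Complex.sub_im]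
      have : z₀.im * (z₀.im + t * (z.im - z₀.im))
          = (1 - t) * (z₀.im * z₀.im) + t * p := by rw [hpdef]; ring
      rw [this, hsq]
      nlinarith
    calc m ≤ z₀.im * (g k).im := hlow
      _ ≤ |z₀.im * (g k).im| := le_abs_self _
      _ = |(g k).im| := by rw [abs_mul, h1, one_mul]
  have hstep : ∀ k : ℕ, ‖g (k + 1) - g k‖ < m := by
    intro k
    have hd : g (k + 1) - g k = ((1 / (n : ℝ) : ℝ) : ℂ) * (z - z₀) := by
      rw [hgdef]
      push_cast
      have : ((n : ℂ)) ≠ 0 := Nat.cast_ne_zero.mpr hnn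
      field_simp
      ring
    rw [hd, norm_mul, Complex.norm_real, Real.norm_eq_abs,
      abs_of_nonneg (by positivity : (0:ℝ) ≤ 1 / (n : ℝ))]
    rw [div_mul_eq_mul_div, one_mul, div_lt_iff₀ hn0]
    linarith [hdist]
  have main : ∀ k : ℕ, k ≤ n →
      ∀ w : H, (∀ u : D, ⟪A u - (g k) • (u : H), w⟫ = 0) → w = 0 := by
    intro k
    induction k with
    | zero =>
      intro _
      have hg0 : g 0 = z₀ := by simp [hgdef]
      rw [hg0]; exact hN0
    | succ k ih =>
      intro hk
      have hk' : k ≤ n := le_trans (Nat.le_succ k) hk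
      refine aux_step D A hsym (g k) (g (k + 1)) ?_ (ih hk')
      exact lt_of_lt_of_le (hstep k) (hglow k hk')
  have hgn : g n = z := by
    rw [hgdef]
    simp only []
    rw [div_self (by exact_mod_cast hnn : ((n : ℝ)) ≠ 0)]
    simp
  have := main n le_rfl
  rw [hgn] at this
  exact this

/-- If a densely defined symmetric operator `A` is essentially self-adjoint (both
deficiency subspaces vanish), then its spectral function is unique; equivalently
(as formalized here), its generalized resolvent is unique: for any two self-adjoint
extensions `Â₁, Â₂` of `A` in Hilbert spaces `Ĥ₁, Ĥ₂ ⊇ H`, the compressions to `H`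
of their resolvents coincide. -/
theorem stmt16 {H : Type*} [NormedAddCommGroup H] [InnerProductSpace ℂ H]
    [CompleteSpace H]
    (D : Submodule ℂ H) (hdense : Dense (D : Set H))
    (A : D →ₗ[ℂ] H)
    (hsym : ∀ u v : D, ⟪A u, (v : H)⟫ = ⟪(u : H), A v⟫)
    -- the deficiency subspaces `N_{∓i}` vanish, i.e. `Ā` is self-adjoint
    (hdef1 : ∀ w : H, (∀ u : D, ⟪A u - Complex.I • (u : H), w⟫ = 0) → w = 0)
    (hdef2 : ∀ w : H, (∀ u : D, ⟪A u + Complex.I • (u : H), w⟫ = 0) → w = 0)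
    -- first self-adjoint extension, in `Ĥ₁ ⊇ H`
    {H1 : Type*} [NormedAddCommGroup H1] [InnerProductSpace ℂ H1] [CompleteSpace H1]
    (J1 : H →ₗᵢ[ℂ] H1)
    (D1 : Submodule ℂ H1) (A1 : D1 →ₗ[ℂ] H1) (hdense1 : Dense (D1 : Set H1))
    (hext1 : ∀ u : D, ∃ h : J1 (u : H) ∈ D1, A1 ⟨J1 (u : H), h⟩ = J1 (A u))
    (hsa1 : ∀ v w : H1,
      (∀ u : D1, ⟪A1 u, v⟫ = ⟪(u : H1), w⟫) ↔ ∃ hv : v ∈ D1, A1 ⟨v, hv⟩ = w)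
    (R1 : ℂ → H1 →L[ℂ] H1)
    (hR1 : ∀ z : ℂ, z.im ≠ 0 → ∀ u : H1,
      ∃ h : R1 z u ∈ D1, A1 ⟨R1 z u, h⟩ - z • R1 z u = u)
    (hR1' : ∀ z : ℂ, z.im ≠ 0 → ∀ u : D1, R1 z (A1 u - z • (u : H1)) = (u : H1))
    -- second self-adjoint extension, in `Ĥ₂ ⊇ H`
    {H2 : Type*} [NormedAddCommGroup H2] [InnerProductSpace ℂ H2] [CompleteSpace H2]
    (J2 : H →ₗᵢ[ℂ] H2)
    (D2 : Submodule ℂ H2) (A2 : D2 →ₗ[ℂ] H2) (hdense2 : Dense (D2 : Set H2))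
    (hext2 : ∀ u : D, ∃ h : J2 (u : H) ∈ D2, A2 ⟨J2 (u : H), h⟩ = J2 (A u))
    (hsa2 : ∀ v w : H2,
      (∀ u : D2, ⟪A2 u, v⟫ = ⟪(u : H2), w⟫) ↔ ∃ hv : v ∈ D2, A2 ⟨v, hv⟩ = w)
    (R2 : ℂ → H2 →L[ℂ] H2)
    (hR2 : ∀ z : ℂ, z.im ≠ 0 → ∀ u : H2,
      ∃ h : R2 z u ∈ D2, A2 ⟨R2 z u, h⟩ - z • R2 z u = u)
    (hR2' : ∀ z : ℂ, z.im ≠ 0 → ∀ u : D2, R2 z (A2 u - z • (u : H2)) = (u : H2)) :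
    ∀ z : ℂ, z.im ≠ 0 → ∀ u v : H,
      ⟪J1 v, R1 z (J1 u)⟫ = ⟪J2 v, R2 z (J2 u)⟫ := by
  intro z hz u v
  have hNmi : ∀ w : H, (∀ u : D, ⟪A u - (-Complex.I) • (u : H), w⟫ = 0) → w = 0 := by
    intro w hw
    refine hdef2 w fun u' => ?_
    have := hw u'
    rwa [neg_smul, sub_neg_eq_add] at this
  have hNz : ∀ w : H, (∀ u : D, ⟪A u - z • (u : H), w⟫ = 0) → w = 0 := by
    rcases lt_or_gt_of_ne hz with hneg | hpos
    · refine aux_global D A hsym (-Complex.I) z ?_ ?_ hNmi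
      · simp
      · simp only [Complex.neg_im, Complex.I_im]
        nlinarith
    · refine aux_global D A hsym Complex.I z ?_ ?_ hdef1
      · simp
      · simp only [Complex.I_im, one_mul]
        exact hpos
  have hd := aux_dense D A z hNz
  have hcont1 : Continuous fun x : H => ⟪J1 v, R1 z (J1 x)⟫ :=
    continuous_const.inner ((R1 z).continuous.comp J1.continuous)
  have hcont2 : Continuous fun x : H => ⟪J2 v, R2 z (J2 x)⟫ :=
    continuous_const.inner ((R2 z).continuous.comp J2.continuous)
  have heq : Set.EqOn (fun x : H => ⟪J1 v, R1 z (J1 x)⟫)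
      (fun x : H => ⟪J2 v, R2 z (J2 x)⟫)
      ((LinearMap.range (A - z • D.subtype) : Submodule ℂ H) : Set H) := by
    intro x hx
    obtain ⟨p, hp⟩ := LinearMap.mem_range.mp hx
    have hpx : A p - z • (p : H) = x := by simpa using hp
    obtain ⟨h1m, h1e⟩ := hext1 p
    obtain ⟨h2m, h2e⟩ := hext2 p
    have hx1 : J1 x = A1 ⟨J1 (p : H), h1m⟩ - z • (J1 (p : H)) := by
      rw [← hpx, map_sub, map_smul, h1e]
    have hx2 : J2 x = A2 ⟨J2 (p : H), h2m⟩ - z • (J2 (p : H)) := by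
      rw [← hpx, map_sub, map_smul, h2e]
    have hr1 : R1 z (J1 x) = J1 (p : H) := by
      rw [hx1]; exact hR1' z hz ⟨J1 (p : H), h1m⟩
    have hr2 : R2 z (J2 x) = J2 (p : H) := by
      rw [hx2]; exact hR2' z hz ⟨J2 (p : H), h2m⟩
    simp only [hr1, hr2, J1.inner_map_map, J2.inner_map_map]
  exact congrFun (Continuous.ext_on hd hcont1 hcont2 heq) u
end
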